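/- Let g = sl(2,ℂ) with standard basis X, H, Y, and let M = F_μ be the g-module with basis {t₀^{a}t₁^{b} : a+b = μ₀+μ₁, a ∈ μ₀+ℤ} where X = t₀∂/∂t₁, Y = t₁∂/∂t₀, H = t₀∂/∂t₀ − t₁∂/∂t₁, with μ₀, μ₁ ∉ ℤ. Then the map c : g → End(M) defined by c(H) = 0, c(X) = 0, c(Y) = b·X^{-1} (for b ∈ ℂ, where X acts invertibly on M so X^{-1} makes sense) satisfies the 1-cocycle condition c([g₁,g₂]) = [g₁, c(g₂)] − [g₂, c(g₁)] for all g₁, g₂ ∈ g. -/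

import Mathlib

/-! The cuspidal `sl(2)`-module `F_μ = t^μ ℂ[t₀^{±1}, t₁^{±1}]` (total degree `|μ|`), realized on
coefficient functions `ℤ → ℂ` with respect to the basis `e_k = t₀^{μ₀+k} t₁^{μ₁-k}`.
The standard generators act by `X = t₀∂₁`, `Y = t₁∂₀`, `H = t₀∂₀ − t₁∂₁`. -/

/-- The action of `X = t₀ ∂/∂t₁` on `F_μ`:  `X e_k = (μ₁ - k) e_{k+1}`. -/
noncomputable def Xop (μ₁ : ℂ) : Module.End ℂ (ℤ → ℂ) where
  toFun f := fun k => (μ₁ - ((k : ℂ) - 1)) * f (k - 1)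
  map_add' f g := by funext k; simp [mul_add]
  map_smul' c f := by funext k; simp [smul_eq_mul]; ring

/-- The action of `Y = t₁ ∂/∂t₀` on `F_μ`:  `Y e_k = (μ₀ + k) e_{k-1}`. -/
noncomputable def Yop (μ₀ : ℂ) : Module.End ℂ (ℤ → ℂ) where
  toFun f := fun k => (μ₀ + ((k : ℂ) + 1)) * f (k + 1)
  map_add' f g := by funext k; simp [mul_add]
  map_smul' c f := by funext k; simp [smul_eq_mul]; ring

/-- The action of `H = t₀ ∂/∂t₀ − t₁ ∂/∂t₁` on `F_μ`:  `H e_k = (μ₀ - μ₁ + 2k) e_k`. -/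
noncomputable def Hop (μ₀ μ₁ : ℂ) : Module.End ℂ (ℤ → ℂ) where
  toFun f := fun k => (μ₀ - μ₁ + 2 * (k : ℂ)) * f k
  map_add' f g := by funext k; simp [mul_add]
  map_smul' c f := by funext k; simp [smul_eq_mul]; ring

/-- The inverse `X⁻¹` of the (bijective, since `μ₁ ∉ ℤ`) action of `X` on `F_μ`. -/
noncomputable def Xinv (μ₁ : ℂ) : Module.End ℂ (ℤ → ℂ) where
  toFun f := fun k => f (k + 1) / (μ₁ - (k : ℂ))
  map_add' f g := by funext k; simp [add_div]
  map_smul' c f := by funext k; simp [smul_eq_mul]; ring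

attribute [local instance 100] LieRing.ofAssociativeRing

/-- For `g = sl(2,ℂ)` with standard basis `X, H, Y` acting on the cuspidal
module `M = F_μ` (`μ₀, μ₁ ∉ ℤ`), the map `c : g → End(M)` with `c(H) = c(X) = 0` and
`c(Y) = b·X⁻¹` satisfies the 1-cocycle condition
`c([g₁,g₂]) = [g₁, c(g₂)] − [g₂, c(g₁)]` for all `g₁, g₂ ∈ g`. -/

lemma XopXinv (μ₁ : ℂ) (hμ₁ : ∀ z : ℤ, μ₁ ≠ z) : Xop μ₁ * Xinv μ₁ = 1 := by
  ext f k
  have h : μ₁ - ((k : ℂ) - 1) ≠ 0 := by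
    have := hμ₁ (k - 1)
    intro h0
    exact this (by push_cast; linear_combination h0)
  simp [Xop, Xinv, Module.End.mul_apply]
  field_simp

lemma XinvXop (μ₁ : ℂ) (hμ₁ : ∀ z : ℤ, μ₁ ≠ z) : Xinv μ₁ * Xop μ₁ = 1 := by
  ext f k
  have h : μ₁ - (k : ℂ) ≠ 0 := by
    have := hμ₁ k
    intro h0; exact this (by linear_combination h0)
  simp [Xop, Xinv, Module.End.mul_apply]
  field_simp

lemma lie_smul_end (a : ℂ) (A B : Module.End ℂ (ℤ → ℂ)) : ⁅A, a • B⁆ = a • ⁅A, B⁆ := by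
  simp [Ring.lie_def, mul_smul_comm, smul_mul_assoc, smul_sub]

lemma smul_lie_end (a : ℂ) (A B : Module.End ℂ (ℤ → ℂ)) : ⁅a • A, B⁆ = a • ⁅A, B⁆ := by
  simp [Ring.lie_def, mul_smul_comm, smul_mul_assoc, smul_sub]

lemma HXinv (μ₀ μ₁ : ℂ) : ⁅Hop μ₀ μ₁, Xinv μ₁⁆ = (-2 : ℂ) • Xinv μ₁ := by
  ext f k
  simp [Hop, Xinv, Ring.lie_def, Module.End.mul_apply, div_eq_mul_inv, smul_eq_mul]
  ring

theorem sl2_cocycle_condition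
    (L : Type*) [LieRing L] [LieAlgebra ℂ L] (X H Y : L)
    (hHX : ⁅H, X⁆ = (2 : ℂ) • X) (hHY : ⁅H, Y⁆ = (-2 : ℂ) • Y) (hXY : ⁅X, Y⁆ = H)
    (hspan : Submodule.span ℂ {X, H, Y} = (⊤ : Submodule ℂ L))
    (μ₀ μ₁ : ℂ) (hμ₀ : ∀ z : ℤ, μ₀ ≠ z) (hμ₁ : ∀ z : ℤ, μ₁ ≠ z)
    (ρ : L →ₗ⁅ℂ⁆ Module.End ℂ (ℤ → ℂ))
    (hρX : ρ X = Xop μ₁) (hρH : ρ H = Hop μ₀ μ₁) (hρY : ρ Y = Yop μ₀)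
    (b : ℂ) (c : L →ₗ[ℂ] Module.End ℂ (ℤ → ℂ))
    (hcX : c X = 0) (hcH : c H = 0) (hcY : c Y = b • Xinv μ₁) :
    ∀ g₁ g₂ : L, c ⁅g₁, g₂⁆ = ⁅ρ g₁, c g₂⁆ - ⁅ρ g₂, c g₁⁆ := by
  intro g₁ g₂
  have hXX : ⁅Xop μ₁, Xinv μ₁⁆ = 0 := by
    rw [Ring.lie_def, XopXinv μ₁ hμ₁, XinvXop μ₁ hμ₁, sub_self]
  have key : ∀ u ∈ ({X, H, Y} : Set L), ∀ v ∈ ({X, H, Y} : Set L),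
      c ⁅u, v⁆ = ⁅ρ u, c v⁆ - ⁅ρ v, c u⁆ := by
    intro u hu v hv
    rcases hu with rfl | rfl | rfl <;> rcases hv with rfl | rfl | rfl
    · simp [hcX]
    · rw [← lie_skew, hHX]
      simp [hcX, hcH]
    · rw [hXY, hcH, hcY, hcX, hρX]
      simp [lie_smul_end, hXX]
    · rw [hHX]
      simp [hcX, hcH]
    · simp [hcH]
    · rw [hHY, map_smul, hcY, hcH, hρH]
      simp only [lie_smul_end, HXinv μ₀ μ₁, lie_zero, zero_lie, sub_zero]
      module
    · rw [← lie_skew, hXY, map_neg, hcH, hcY, hcX, hρX]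
      simp [lie_smul_end, hXX]
    · rw [← lie_skew, hHY, map_neg, map_smul, hcY, hcH, hρH]
      simp only [lie_zero, lie_smul_end, HXinv μ₀ μ₁]
      module
    · simp [hcY]
  have mem : ∀ g : L, g ∈ Submodule.span ℂ ({X, H, Y} : Set L) := by
    intro g; rw [hspan]; exact Submodule.mem_top
  have key2 : ∀ u ∈ ({X, H, Y} : Set L), ∀ v : L,
      c ⁅u, v⁆ = ⁅ρ u, c v⁆ - ⁅ρ v, c u⁆ := by
    intro u hu v
    induction mem v using Submodule.span_induction with
    | mem x hx => exact key u hu x hx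
    | zero => simp
    | add x y _ _ hx hy =>
      simp only [lie_add, add_lie, map_add, hx, hy]
      abel
    | smul a x _ hx =>
      rw [show ⁅u, a • x⁆ = a • ⁅u, x⁆ from lie_smul a u x, map_smul, hx, smul_sub]
      simp only [map_smul, lie_smul_end, smul_lie_end]
  induction mem g₁ using Submodule.span_induction with
  | mem x hx => exact key2 x hx g₂
  | zero => simp
  | add x y _ _ hx hy =>
    simp only [lie_add, add_lie, map_add, hx, hy]
    abel
  | smul a x _ hx =>
    rw [show ⁅a • x, g₂⁆ = a • ⁅x, g₂⁆ from smul_lie a x g₂, map_smul, hx, smul_sub]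
    simp only [map_smul, lie_smul_end, smul_lie_end]
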